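/- Let f = x_0^2·x_4 + x_1^3·x_3 + x_1·x_2^5 + x_0·x_3^{12} + x_2·x_4^{165} ∈ ℂ[x_0, …, x_4]. If a point x ∈ ℂ^5 satisfies ∂f/∂x_i(x) = 0 for all i = 0, …, 4, then x = 0. (Hence the hypersurface {f = 0} of degree 191 in ℙ(95, 61, 26, 8, 1) is quasismooth.) -/
import Mathlib


open MvPolynomial

/-- The only common zero of the partial derivatives of
`f = x₀²x₄ + x₁³x₃ + x₁x₂⁵ + x₀x₃¹² + x₂x₄¹⁶⁵` is the origin; hence the degree-191
hypersurface `{f = 0} ⊂ ℙ(95,61,26,8,1)` is quasismooth. -/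
theorem dim3_example_quasismooth
    (f : MvPolynomial (Fin 5) ℂ)
    (hf : f = X 0 ^ 2 * X 4 + X 1 ^ 3 * X 3 + X 1 * X 2 ^ 5 + X 0 * X 3 ^ 12 +
      X 2 * X 4 ^ 165) :
    ∀ x : Fin 5 → ℂ, (∀ i, MvPolynomial.eval x (MvPolynomial.pderiv i f) = 0) →
      x = 0 := by
  subst hf
  intro x h
  have h0 := h 0
  have h1 := h 1
  have h2 := h 2
  have h3 := h 3
  have h4 := h 4
  simp (config := { decide := true }) [pderiv_X, Pi.single_apply] at h0 h1 h2 h3 h4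
  set a := x 0 with ha
  set b := x 1 with hb
  set c := x 2 with hc
  set d := x 3 with hd
  set e := x 4 with he
  by_cases he0 : e = 0
  · -- If x₄ = 0 then all coordinates vanish, one by one.
    have ha0 : a = 0 := by
      have : a ^ 2 = 0 := by rw [he0] at h4; simpa using h4
      exact pow_eq_zero_iff (two_ne_zero) |>.mp this
    have hd0 : d = 0 := by
      have : d ^ 12 = 0 := by rw [he0] at h0; simpa using h0
      exact pow_eq_zero_iff (by norm_num) |>.mp this
    have hb0 : b = 0 := by
      have : b ^ 3 = 0 := by rw [ha0] at h3; simpa using h3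
      exact pow_eq_zero_iff (by norm_num) |>.mp this
    have hc0 : c = 0 := by
      have : c ^ 5 = 0 := by rw [hd0] at h1; simpa using h1
      exact pow_eq_zero_iff (by norm_num) |>.mp this
    funext i
    fin_cases i <;> simp [← ha, ← hb, ← hc, ← hd, ← he, ha0, hb0, hc0, hd0, he0]
  · -- If x₄ ≠ 0 then all coordinates are nonzero, leading to a contradiction.
    exfalso
    have e2' : e ^ 165 = -(5 * b * c ^ 4) := by linear_combination h2
    have e1' : c ^ 5 = -(3 * b ^ 2 * d) := by linear_combination h1
    have e3' : b ^ 3 = -(12 * a * d ^ 11) := by linear_combination h3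
    have e0' : d ^ 12 = -(2 * a * e) := by linear_combination h0
    have e4' : a ^ 2 = -(165 * c * e ^ 164) := by linear_combination h4
    have hb0 : b ≠ 0 := by
      intro hb0
      rw [hb0] at e2'
      exact he0 (pow_eq_zero_iff (n := 165) (by norm_num) |>.mp (by rw [e2']; ring))
    have hc0 : c ≠ 0 := by
      intro hc0
      apply he0
      refine pow_eq_zero_iff (n := 165) (by norm_num) |>.mp ?_
      rw [e2', hc0]; ring
    have hd0 : d ≠ 0 := by
      intro hd0
      apply hc0
      refine pow_eq_zero_iff (n := 5) (by norm_num) |>.mp ?_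
      rw [e1', hd0]; ring
    have ha0 : a ≠ 0 := by
      intro ha0
      apply hb0
      refine pow_eq_zero_iff (n := 3) (by norm_num) |>.mp ?_
      rw [e3', ha0]; ring
    have hP : a ^ 2 * b ^ 3 * c ^ 5 * d ^ 12 * e ^ 165 ≠ 0 := by
      exact mul_ne_zero (mul_ne_zero (mul_ne_zero (mul_ne_zero
        (pow_ne_zero _ ha0) (pow_ne_zero _ hb0)) (pow_ne_zero _ hc0))
        (pow_ne_zero _ hd0)) (pow_ne_zero _ he0)
    have key : a ^ 2 * b ^ 3 * c ^ 5 * d ^ 12 * e ^ 165 =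
        -59400 * (a ^ 2 * b ^ 3 * c ^ 5 * d ^ 12 * e ^ 165) := by
      conv_lhs => rw [e4', e3', e1', e0', e2']
      ring
    have : (59401 : ℂ) * (a ^ 2 * b ^ 3 * c ^ 5 * d ^ 12 * e ^ 165) = 0 := by
      linear_combination key
    rcases mul_eq_zero.mp this with h | h
    · norm_num at h
    · exact hP h
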